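/- Let f : ℝⁿ → ℝ be convex and differentiable with L-Lipschitz gradient. Consider the accelerated gradient method: y₀ = x₀, θ₀ = 1, x_{k+1} = y_k - (1/L)∇f(y_k), θ_{k+1} ∈ (0,1) with θ_{k+1}² = θ_k²(1 - θ_{k+1}), and y_{k+1} = x_{k+1} + (θ_{k+1}(1 - θ_k)/θ_k)(x_{k+1} - x_k). Then for all k ≥ 1 and all x ∈ ℝⁿ: f(x_k) ≤ f(x) + (L θ_{k-1}²/2)‖x₀ - x‖². -/

import Mathlib

open scoped RealInnerProductSpace

open Set Filter Topology

section AGAux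
variable {E : Type*} [NormedAddCommGroup E] [InnerProductSpace ℝ E] [CompleteSpace E]

variable {E : Type*} [NormedAddCommGroup E] [InnerProductSpace ℝ E] [CompleteSpace E]

lemma line_hasDerivAt {f : E → ℝ} {g : E} (p w : E) (t : ℝ)
    (hg : HasGradientAt f g (p + t • w)) :
    HasDerivAt (fun s : ℝ => f (p + s • w)) ⟪g, w⟫ t := by
  have hc : HasDerivAt (fun s : ℝ => p + s • w) w t := by
    simpa using ((hasDerivAt_id t).smul_const w).const_add p
  have hf : HasFDerivAt f (InnerProductSpace.toDual ℝ E g) (p + t • w) :=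
    hasGradientAt_iff_hasFDerivAt.mp hg
  have := hf.comp_hasDerivAt t hc
  simp at this
  exact this

lemma convex_grad_le {f : E → ℝ} (hconv : ConvexOn ℝ Set.univ f)
    {g p : E} (hg : HasGradientAt f g p) (u : E) :
    f p + ⟪g, u - p⟫ ≤ f u := by
  set h : ℝ → ℝ := fun s => f (p + s • (u - p)) with hh
  have hd : HasDerivAt h ⟪g, u - p⟫ 0 := line_hasDerivAt p (u - p) 0 (by simpa using hg)
  have ht : Tendsto (slope h 0) (𝓝[>] 0) (𝓝 ⟪g, u - p⟫) :=
    (hasDerivAt_iff_tendsto_slope.mp hd).mono_left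
      (nhdsWithin_mono _ (fun s hs => ne_of_gt hs))
  have hb : ∀ᶠ s in 𝓝[>] (0:ℝ), slope h 0 s ≤ f u - f p := by
    filter_upwards [Ioo_mem_nhdsGT_of_mem (⟨le_refl (0:ℝ), one_pos⟩ : (0:ℝ) ∈ Ico (0:ℝ) 1)]
      with s hs
    have h1 : p + s • (u - p) = (1 - s) • p + s • u := by module
    have h2 : h s ≤ (1 - s) * f p + s * f u := by
      show f (p + s • (u - p)) ≤ _
      rw [h1]
      exact hconv.2 (mem_univ p) (mem_univ u) (by linarith [hs.2]) (le_of_lt hs.1) (by ring)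
    have h0 : h 0 = f p := by simp [hh]
    rw [slope_def_field, h0, sub_zero, div_le_iff₀ hs.1]
    nlinarith [hs.1]
  have := le_of_tendsto ht hb
  linarith

lemma descent_lemma {f : E → ℝ} {f' : E → E} {L : ℝ} (hL : 0 < L)
    (hdiff : ∀ x : E, HasGradientAt f (f' x) x)
    (hlip : ∀ x y : E, ‖f' x - f' y‖ ≤ L * ‖x - y‖) (p z : E) :
    f z ≤ f p + ⟪f' p, z - p⟫ + L / 2 * ‖z - p‖ ^ 2 := by
  set w := z - p with hw
  set φ : ℝ → ℝ := fun t => f (p + t • w) - t * ⟪f' p, w⟫ - L / 2 * t ^ 2 * ‖w‖ ^ 2 with hφ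
  have hφd : ∀ t : ℝ, HasDerivAt φ
      (⟪f' (p + t • w), w⟫ - ⟪f' p, w⟫ - L * t * ‖w‖ ^ 2) t := by
    intro t
    have h1 := line_hasDerivAt p w t (hdiff (p + t • w))
    have h2 : HasDerivAt (fun s : ℝ => s * ⟪f' p, w⟫) ⟪f' p, w⟫ t := by
      simpa using (hasDerivAt_id t).mul_const ⟪f' p, w⟫
    have h3 : HasDerivAt (fun s : ℝ => L / 2 * s ^ 2 * ‖w‖ ^ 2)
        (L * t * ‖w‖ ^ 2) t := by
      have := ((hasDerivAt_pow 2 t).const_mul (L / 2)).mul_const (‖w‖ ^ 2)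
      exact this.congr_deriv (by ring)
    exact (h1.sub h2).sub h3
  have hdiffφ : Differentiable ℝ φ := fun t => (hφd t).differentiableAt
  have hanti : AntitoneOn φ (Icc (0:ℝ) 1) := by
    apply antitoneOn_of_deriv_nonpos (convex_Icc 0 1) hdiffφ.continuous.continuousOn
      (hdiffφ.differentiableOn)
    intro t ht
    rw [interior_Icc] at ht
    rw [(hφd t).deriv]
    have h4 : ⟪f' (p + t • w) - f' p, w⟫ ≤ ‖f' (p + t • w) - f' p‖ * ‖w‖ :=
      real_inner_le_norm _ _
    have h5 : ‖f' (p + t • w) - f' p‖ ≤ L * (t * ‖w‖) := by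
      have := hlip (p + t • w) p
      simpa [norm_smul, abs_of_pos ht.1] using this
    have h6 : ⟪f' (p + t • w), w⟫ - ⟪f' p, w⟫ = ⟪f' (p + t • w) - f' p, w⟫ := by
      rw [inner_sub_left]
    rw [h6]
    nlinarith [norm_nonneg w, norm_nonneg (f' (p + t • w) - f' p), ht.1]
  have := hanti (⟨le_refl 0, zero_le_one⟩ : (0:ℝ) ∈ Icc (0:ℝ) 1)
    (⟨zero_le_one, le_refl 1⟩ : (1:ℝ) ∈ Icc (0:ℝ) 1) zero_le_one
  have h0 : φ 0 = f p := by simp [hφ]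
  have h1 : φ 1 = f z - ⟪f' p, w⟫ - L / 2 * ‖w‖ ^ 2 := by
    simp [hφ, hw]
  rw [h0, h1] at this
  linarith


lemma key_step {f : E → ℝ} {f' : E → E} {L : ℝ} (hL : 0 < L)
    (hconv : ConvexOn ℝ Set.univ f)
    (hdiff : ∀ x : E, HasGradientAt f (f' x) x)
    (hlip : ∀ x y : E, ‖f' x - f' y‖ ≤ L * ‖x - y‖)
    (p q u : E) (hq : q = p - (1 / L) • f' p) :
    f q ≤ f u + L / 2 * (‖p - u‖ ^ 2 - ‖q - u‖ ^ 2) := by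
  have hLne : L ≠ 0 := ne_of_gt hL
  set g := f' p with hg
  have h1 := descent_lemma hL hdiff hlip p q
  have h2 := convex_grad_le hconv (hdiff p) u
  have e0 : q - p = -((1 / L) • g) := by rw [hq]; abel
  have e1 : ⟪g, q - p⟫ = -(1 / L * ‖g‖ ^ 2) := by
    rw [e0, inner_neg_right, real_inner_smul_right, real_inner_self_eq_norm_sq]
  have e2 : ‖q - p‖ ^ 2 = (1 / L) ^ 2 * ‖g‖ ^ 2 := by
    rw [e0, norm_neg, norm_smul, Real.norm_eq_abs, abs_of_pos (by positivity : (0:ℝ) < 1 / L)]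
    ring
  rw [e1, e2] at h1
  have e3 : ‖q - u‖ ^ 2 = ‖p - u‖ ^ 2 - 2 * (1 / L) * ⟪p - u, g⟫ + (1 / L) ^ 2 * ‖g‖ ^ 2 := by
    have e4 : q - u = (p - u) - (1 / L) • g := by rw [hq]; abel
    rw [e4, norm_sub_sq_real, real_inner_smul_right, norm_smul, Real.norm_eq_abs,
      abs_of_pos (by positivity : (0:ℝ) < 1 / L)]
    ring
  have e5 : ⟪g, u - p⟫ = -⟪p - u, g⟫ := by
    rw [real_inner_comm, ← inner_neg_left]; congr 1; abel
  rw [e5] at h2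
  rw [e3]
  have h6 : L / 2 * (2 * (1 / L) * ⟪p - u, g⟫ - (1 / L) ^ 2 * ‖g‖ ^ 2)
      = ⟪p - u, g⟫ - 1 / (2 * L) * ‖g‖ ^ 2 := by field_simp
  have h7 : -(1 / L * ‖g‖ ^ 2) + L / 2 * ((1 / L) ^ 2 * ‖g‖ ^ 2)
      = -(1 / (2 * L) * ‖g‖ ^ 2) := by field_simp; ring
  nlinarith [h1, h2]


end AGAux

theorem accelerated_gradient_bound
    {E : Type*} [NormedAddCommGroup E] [InnerProductSpace ℝ E] [CompleteSpace E]
    (f : E → ℝ) (f' : E → E) (L : ℝ) (hL : 0 < L)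
    (hconv : ConvexOn ℝ Set.univ f)
    (hdiff : ∀ x : E, HasGradientAt f (f' x) x)
    (hlip : ∀ x y : E, ‖f' x - f' y‖ ≤ L * ‖x - y‖)
    (x y : ℕ → E) (θ : ℕ → ℝ)
    (hy0 : y 0 = x 0) (hθ0 : θ 0 = 1)
    (hx : ∀ k, x (k + 1) = y k - (1 / L) • f' (y k))
    (hθmem : ∀ k, θ (k + 1) ∈ Set.Ioo (0 : ℝ) 1)
    (hθrec : ∀ k, θ (k + 1) ^ 2 = θ k ^ 2 * (1 - θ (k + 1)))
    (hyrec : ∀ k, y (k + 1)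
      = x (k + 1) + (θ (k + 1) * (1 - θ k) / θ k) • (x (k + 1) - x k)) :
    ∀ k : ℕ, 1 ≤ k → ∀ u : E,
      f (x k) ≤ f u + L * θ (k - 1) ^ 2 / 2 * ‖x 0 - u‖ ^ 2 := by
  have hθpos : ∀ n, 0 < θ n := by
    intro n
    cases n with
    | zero => simp [hθ0]
    | succ m => exact (hθmem m).1
  have hθle1 : ∀ n, θ n ≤ 1 := by
    intro n
    cases n with
    | zero => simp [hθ0]
    | succ m => exact le_of_lt (hθmem m).2
  obtain ⟨v, hv0, hvs⟩ : ∃ v : ℕ → E, v 0 = x 0 ∧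
      ∀ m, v (m + 1) = x m + (θ m)⁻¹ • (x (m + 1) - x m) :=
    ⟨fun n => Nat.casesOn n (x 0) (fun m => x m + (θ m)⁻¹ • (x (m + 1) - x m)),
      rfl, fun m => rfl⟩
  have hyv : ∀ m, y m = (1 - θ m) • x m + θ m • v m := by
    intro m
    cases m with
    | zero => simp [hθ0, hv0, hy0]
    | succ m =>
      have hne : θ m ≠ 0 := (hθpos m).ne'
      rw [hyrec m, hvs m]
      match_scalars <;> field_simp <;> ring
  have hxv : ∀ m, x (m + 1) = (1 - θ m) • x m + θ m • v (m + 1) := by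
    intro m
    have hne : θ m ≠ 0 := (hθpos m).ne'
    rw [hvs m]
    match_scalars <;> field_simp <;> ring
  have step : ∀ m, ∀ u : E, f (x (m + 1)) ≤ (1 - θ m) * f (x m) + θ m * f u
      + L / 2 * (θ m ^ 2 * ‖v m - u‖ ^ 2 - θ m ^ 2 * ‖v (m + 1) - u‖ ^ 2) := by
    intro m u
    have hkey := key_step hL hconv hdiff hlip (y m) (x (m + 1))
      ((1 - θ m) • x m + θ m • u) (hx m)
    have e1 : y m - ((1 - θ m) • x m + θ m • u) = θ m • (v m - u) := by
      rw [hyv m]; module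
    have e2 : x (m + 1) - ((1 - θ m) • x m + θ m • u) = θ m • (v (m + 1) - u) := by
      rw [hxv m]; module
    rw [e1, e2] at hkey
    have n1 : ‖θ m • (v m - u)‖ ^ 2 = θ m ^ 2 * ‖v m - u‖ ^ 2 := by
      rw [norm_smul, Real.norm_eq_abs, mul_pow, sq_abs]
    have n2 : ‖θ m • (v (m + 1) - u)‖ ^ 2 = θ m ^ 2 * ‖v (m + 1) - u‖ ^ 2 := by
      rw [norm_smul, Real.norm_eq_abs, mul_pow, sq_abs]
    rw [n1, n2] at hkey
    have hcv : f ((1 - θ m) • x m + θ m • u) ≤ (1 - θ m) * f (x m) + θ m * f u :=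
      hconv.2 (mem_univ _) (mem_univ _) (by linarith [hθle1 m]) (le_of_lt (hθpos m))
        (by ring)
    linarith
  intro k hk u
  have main : ∀ n, 1 ≤ n →
      (f (x n) - f u) / θ (n - 1) ^ 2 + L / 2 * ‖v n - u‖ ^ 2 ≤ L / 2 * ‖x 0 - u‖ ^ 2 := by
    intro n hn
    induction n, hn using Nat.le_induction with
    | base =>
      have h := step 0 u
      rw [hθ0, hv0] at h
      norm_num at h ⊢
      rw [hθ0]
      norm_num
      linarith
    | succ n hn ih =>
      have h := step n u
      have hb : 0 < θ n := hθpos n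
      have hb2 : 0 < θ n ^ 2 := by positivity
      have ha : 0 < θ (n - 1) := hθpos (n - 1)
      have ha2 : 0 < θ (n - 1) ^ 2 := pow_pos ha 2
      have hb1 : θ n < 1 := by
        have := (hθmem (n - 1)).2
        rwa [Nat.sub_add_cancel hn] at this
      have hrec : θ n ^ 2 = θ (n - 1) ^ 2 * (1 - θ n) := by
        have := hθrec (n - 1)
        rwa [Nat.sub_add_cancel hn] at this
      have hP : f (x n) - f u ≤ (L / 2 * ‖x 0 - u‖ ^ 2 - L / 2 * ‖v n - u‖ ^ 2)
          * θ (n - 1) ^ 2 := by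
        rw [← div_le_iff₀ ha2]
        linarith
      have h5 : (1 - θ n) * (f (x n) - f u) ≤ (1 - θ n) *
          ((L / 2 * ‖x 0 - u‖ ^ 2 - L / 2 * ‖v n - u‖ ^ 2) * θ (n - 1) ^ 2) :=
        mul_le_mul_of_nonneg_left hP (by linarith)
      have h6 : (1 - θ n) * ((L / 2 * ‖x 0 - u‖ ^ 2 - L / 2 * ‖v n - u‖ ^ 2)
          * θ (n - 1) ^ 2) = θ n ^ 2 * (L / 2 * ‖x 0 - u‖ ^ 2 - L / 2 * ‖v n - u‖ ^ 2) := by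
        rw [hrec]; ring
      have hQ : f (x (n + 1)) - f u ≤ (L / 2 * ‖x 0 - u‖ ^ 2 - L / 2 * ‖v (n + 1) - u‖ ^ 2)
          * θ n ^ 2 := by nlinarith [h, h5, h6]
      have : (f (x (n + 1)) - f u) / θ n ^ 2 ≤
          L / 2 * ‖x 0 - u‖ ^ 2 - L / 2 * ‖v (n + 1) - u‖ ^ 2 := by
        rw [div_le_iff₀ hb2]; linarith
      simpa [Nat.add_sub_cancel] using (by linarith : (f (x (n + 1)) - f u) / θ n ^ 2
        + L / 2 * ‖v (n + 1) - u‖ ^ 2 ≤ L / 2 * ‖x 0 - u‖ ^ 2)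
    -- end induction
  have hm := main k hk
  have ha2 : 0 < θ (k - 1) ^ 2 := pow_pos (hθpos _) 2
  have h1 : f (x k) - f u ≤ (L / 2 * ‖x 0 - u‖ ^ 2 - L / 2 * ‖v k - u‖ ^ 2)
      * θ (k - 1) ^ 2 := by
    rw [← div_le_iff₀ ha2]; linarith
  nlinarith [norm_nonneg (v k - u), sq_nonneg ‖v k - u‖, h1, ha2,
    mul_nonneg (mul_nonneg (le_of_lt hL) (sq_nonneg ‖v k - u‖)) (le_of_lt ha2)]
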